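/- The Gaussian kernel on ℝ is positive semidefinite: for every n : ℕ, every family of points x : Fin n → ℝ, and every family of coefficients c : Fin n → ℝ, one has Σ_{i} Σ_{j} c i * c j * Real.exp (-(x i - x j)^2) ≥ 0. -/
import Mathlib

lemma real_exp_tsum (y : ℝ) : Real.exp y = ∑' k : ℕ, y ^ k / (k.factorial : ℝ) := by
  rw [Real.exp_eq_exp_ℝ, NormedSpace.exp_eq_tsum_div]

/-- The unit-width Gaussian kernel on `ℝ` is positive semidefinite. -/
theorem gaussian_kernel_posSemidef (n : ℕ) (x : Fin n → ℝ) (c : Fin n → ℝ) :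
    0 ≤ ∑ i : Fin n, ∑ j : Fin n, c i * c j * Real.exp (-(x i - x j)^2) := by
  set a : Fin n → ℕ → ℝ := fun i k =>
    c i * Real.exp (-(x i)^2) * (Real.sqrt 2 * x i) ^ k / Real.sqrt (k.factorial) with ha
  have prod_eq : ∀ i j k, a i k * a j k =
      (c i * Real.exp (-(x i)^2) * (c j * Real.exp (-(x j)^2))) *
        ((2 * x i * x j) ^ k / (k.factorial : ℝ)) := by
    intro i j k
    have hs : Real.sqrt (k.factorial) * Real.sqrt (k.factorial) = (k.factorial : ℝ) :=
      Real.mul_self_sqrt (by positivity)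
    have h2 : (Real.sqrt 2 * x i) ^ k * (Real.sqrt 2 * x j) ^ k = (2 * x i * x j) ^ k := by
      rw [← mul_pow]
      congr 1
      have hss : Real.sqrt 2 * Real.sqrt 2 = 2 := Real.mul_self_sqrt (by norm_num)
      linear_combination (x i * x j) * hss
    calc a i k * a j k
        = (c i * Real.exp (-(x i)^2) * (c j * Real.exp (-(x j)^2))) *
            (((Real.sqrt 2 * x i) ^ k * (Real.sqrt 2 * x j) ^ k) /
              (Real.sqrt (k.factorial) * Real.sqrt (k.factorial))) := by
          simp only [ha]; ring
      _ = _ := by rw [h2, hs]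
  have summ : ∀ i j : Fin n, Summable (fun k => a i k * a j k) := by
    intro i j
    simp only [prod_eq]
    exact (Real.summable_pow_div_factorial (2 * x i * x j)).mul_left _
  have key : ∀ i j, c i * c j * Real.exp (-(x i - x j)^2) = ∑' k : ℕ, a i k * a j k := by
    intro i j
    simp only [prod_eq]
    rw [tsum_mul_left, ← real_exp_tsum,
      show -(x i - x j)^2 = -(x i)^2 + (-(x j)^2 + 2 * x i * x j) by ring,
      Real.exp_add, Real.exp_add]
    ring
  calc (0:ℝ) ≤ ∑' k : ℕ, (∑ i : Fin n, a i k) ^ 2 :=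
        tsum_nonneg fun k => sq_nonneg _
    _ = ∑' k : ℕ, ∑ i : Fin n, ∑ j : Fin n, a i k * a j k := by
        refine tsum_congr fun k => ?_
        rw [sq, Finset.sum_mul_sum]
    _ = ∑ i : Fin n, ∑ j : Fin n, ∑' k : ℕ, a i k * a j k := by
        rw [Summable.tsum_finsetSum (fun i _ => summable_sum fun j _ => summ i j)]
        exact Finset.sum_congr rfl fun i _ => Summable.tsum_finsetSum fun j _ => summ i j
    _ = _ := Finset.sum_congr rfl fun i _ =>
        Finset.sum_congr rfl fun j _ => (key i j).symm
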